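/- Let L ≥ 2 be an integer, N = 2^L, and let A ∈ ℂ^{N×N} be a butterfly matrix, i.e., A = X_1 X_2 ⋯ X_L with supp(X_ℓ) ⊆ supp(S_ℓ) for every ℓ ∈ {1,…,L}, where S_ℓ := I_{2^{ℓ−1}} ⊗ J_2 ⊗ I_{N/2^ℓ}. Then A satisfies the complementary low-rank property of rank 1 for the canonical partitions: for every ℓ ∈ {1,…,L−1}, every i ∈ {1,…,N/2^ℓ}, and every j ∈ {1,…,2^ℓ}, the submatrix A_{R^(ℓ)_i, C^(ℓ)_j} has rank at most 1. -/

import Mathlib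

open Matrix Kronecker

/-- The `n × n` all-ones matrix `J_n`. -/
def Jmat (n : ℕ) : Matrix (Fin n) (Fin n) ℂ := Matrix.of fun _ _ => 1

lemma two_pow_div (L ℓ : ℕ) (h : ℓ ≤ L) : 2 ^ L / 2 ^ ℓ = 2 ^ (L - ℓ) :=
  Nat.pow_div h (by norm_num)

lemma two_pow_mul_div (L ℓ : ℕ) (h : ℓ ≤ L) : 2 ^ ℓ * (2 ^ L / 2 ^ ℓ) = 2 ^ L :=
  Nat.mul_div_cancel' (pow_dvd_pow 2 h)

lemma bfly_dim (L ℓ : ℕ) (h1 : 1 ≤ ℓ) (h2 : ℓ ≤ L) :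
    2 ^ (ℓ - 1) * (2 * (2 ^ L / 2 ^ ℓ)) = 2 ^ L := by
  rw [two_pow_div L ℓ h2, show (2 : ℕ) * 2 ^ (L - ℓ) = 2 ^ (L - ℓ + 1) by rw [pow_succ]; ring,
    ← pow_add]
  congr 1
  omega

/-- Reindexing equivalence `Fin 2^(ℓ-1) × (Fin 2 × Fin (2^L/2^ℓ)) ≃ Fin 2^L`,
sending `(a, (b, c))` to the lexicographic index `a·(2·2^L/2^ℓ) + b·(2^L/2^ℓ) + c`. -/
def bflyEquiv (L ℓ : ℕ) (h1 : 1 ≤ ℓ) (h2 : ℓ ≤ L) :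
    Fin (2 ^ (ℓ - 1)) × (Fin 2 × Fin (2 ^ L / 2 ^ ℓ)) ≃ Fin (2 ^ L) :=
  ((Equiv.refl _).prodCongr finProdFinEquiv).trans
    (finProdFinEquiv.trans (finCongr (bfly_dim L ℓ h1 h2)))

/-- The butterfly support `S_ℓ = I_{2^{ℓ-1}} ⊗ J_2 ⊗ I_{N/2^ℓ}`, as an `N × N` matrix,
`N = 2^L`. -/
def bflySupp (L ℓ : ℕ) (h1 : 1 ≤ ℓ) (h2 : ℓ ≤ L) : Matrix (Fin (2 ^ L)) (Fin (2 ^ L)) ℂ :=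
  Matrix.reindex (bflyEquiv L ℓ h1 h2) (bflyEquiv L ℓ h1 h2)
    ((1 : Matrix (Fin (2 ^ (ℓ - 1))) (Fin (2 ^ (ℓ - 1))) ℂ) ⊗ₖ
      (Jmat 2 ⊗ₖ (1 : Matrix (Fin (2 ^ L / 2 ^ ℓ)) (Fin (2 ^ L / 2 ^ ℓ)) ℂ)))

/-- Reindexing equivalence `Fin 2^ℓ × Fin (2^L/2^ℓ) ≃ Fin 2^L` (lexicographic). -/
def blockEquiv (L ℓ : ℕ) (h : ℓ ≤ L) : Fin (2 ^ ℓ) × Fin (2 ^ L / 2 ^ ℓ) ≃ Fin (2 ^ L) :=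
  finProdFinEquiv.trans (finCongr (two_pow_mul_div L ℓ h))

/-- The matrix `J_{2^ℓ} ⊗ I_{N/2^ℓ}`, as an `N × N` matrix, `N = 2^L`. -/
def JkronI (L ℓ : ℕ) (h : ℓ ≤ L) : Matrix (Fin (2 ^ L)) (Fin (2 ^ L)) ℂ :=
  Matrix.reindex (blockEquiv L ℓ h) (blockEquiv L ℓ h)
    (Jmat (2 ^ ℓ) ⊗ₖ (1 : Matrix (Fin (2 ^ L / 2 ^ ℓ)) (Fin (2 ^ L / 2 ^ ℓ)) ℂ))

/-- The matrix `I_{2^ℓ} ⊗ J_{N/2^ℓ}`, as an `N × N` matrix, `N = 2^L`. -/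
def IkronJ (L ℓ : ℕ) (h : ℓ ≤ L) : Matrix (Fin (2 ^ L)) (Fin (2 ^ L)) ℂ :=
  Matrix.reindex (blockEquiv L ℓ h) (blockEquiv L ℓ h)
    ((1 : Matrix (Fin (2 ^ ℓ)) (Fin (2 ^ ℓ)) ℂ) ⊗ₖ Jmat (2 ^ L / 2 ^ ℓ))

/-- The `k`-th element of the canonical row index set `R^(ℓ)_i` (0-based):
`i + k·(N/2^ℓ)`, for `i ∈ Fin (N/2^ℓ)`, `k ∈ Fin 2^ℓ`, `N = 2^L`. -/
def rowIdx (L ℓ : ℕ) (h : ℓ ≤ L) (i : Fin (2 ^ L / 2 ^ ℓ)) (k : Fin (2 ^ ℓ)) : Fin (2 ^ L) :=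
  ⟨(i : ℕ) + (k : ℕ) * (2 ^ L / 2 ^ ℓ), by
    have hi := i.isLt
    have hk := k.isLt
    calc (i : ℕ) + (k : ℕ) * (2 ^ L / 2 ^ ℓ)
        < 2 ^ L / 2 ^ ℓ + (k : ℕ) * (2 ^ L / 2 ^ ℓ) := by omega
      _ = ((k : ℕ) + 1) * (2 ^ L / 2 ^ ℓ) := by ring
      _ ≤ 2 ^ ℓ * (2 ^ L / 2 ^ ℓ) := Nat.mul_le_mul_right _ (by omega)
      _ = 2 ^ L := two_pow_mul_div L ℓ h⟩

/-- The `k`-th element of the canonical column index set `C^(ℓ)_j` (0-based):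
`j·(N/2^ℓ) + k`, for `j ∈ Fin 2^ℓ`, `k ∈ Fin (N/2^ℓ)`, `N = 2^L`. -/
def colIdx (L ℓ : ℕ) (h : ℓ ≤ L) (j : Fin (2 ^ ℓ)) (k : Fin (2 ^ L / 2 ^ ℓ)) : Fin (2 ^ L) :=
  ⟨(j : ℕ) * (2 ^ L / 2 ^ ℓ) + (k : ℕ), by
    have hj := j.isLt
    have hk := k.isLt
    calc (j : ℕ) * (2 ^ L / 2 ^ ℓ) + (k : ℕ)
        < (j : ℕ) * (2 ^ L / 2 ^ ℓ) + (2 ^ L / 2 ^ ℓ) := by omega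
      _ = ((j : ℕ) + 1) * (2 ^ L / 2 ^ ℓ) := by ring
      _ ≤ 2 ^ ℓ * (2 ^ L / 2 ^ ℓ) := Nat.mul_le_mul_right _ (by omega)
      _ = 2 ^ L := two_pow_mul_div L ℓ h⟩

/-- The squared Frobenius norm `‖A‖_F²` of a complex matrix. -/
noncomputable def frobSq {m n : Type*} [Fintype m] [Fintype n] (A : Matrix m n ℂ) : ℝ :=
  ∑ i, ∑ j, ‖A i j‖ ^ 2

/-! ### Auxiliary lemmas -/

/-- Value of the butterfly reindexing equivalence. -/
lemma bflyEquiv_val (L p : ℕ) (h1 : 1 ≤ p) (h2 : p ≤ L)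
    (x : Fin (2 ^ (p - 1)) × (Fin 2 × Fin (2 ^ L / 2 ^ p))) :
    ((bflyEquiv L p h1 h2 x : Fin (2 ^ L)) : ℕ) =
      (x.2.2 : ℕ) + (2 ^ L / 2 ^ p) * (x.2.1 : ℕ) + 2 * (2 ^ L / 2 ^ p) * (x.1 : ℕ) := by
  obtain ⟨a, b, c⟩ := x
  simp [bflyEquiv, finProdFinEquiv]

/-- Extracting mod and div data from a mixed-radix decomposition. -/
lemma decomp_mod_div (q c1 c2 c3 n : ℕ) (hq : 0 < q) (h2 : c2 < 2) (h3 : c3 < q)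
    (hn : n = c3 + q * c2 + 2 * q * c1) : n % q = c3 ∧ n / (2 * q) = c1 := by
  subst hn
  constructor
  · have e : c3 + q * c2 + 2 * q * c1 = c3 + (c2 + 2 * c1) * q := by ring
    rw [e, Nat.add_mul_mod_self_right, Nat.mod_eq_of_lt h3]
  · have e : c3 + q * c2 + 2 * q * c1 = (c3 + q * c2) + (2 * q) * c1 := by ring
    have hle : q * c2 ≤ q * 1 := Nat.mul_le_mul_left q (by omega)
    have hlt : c3 + q * c2 < 2 * q := by omega
    rw [e, Nat.add_mul_div_left _ _ (by omega), Nat.div_eq_of_lt hlt]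
    exact Nat.zero_add c1

/-- Support characterization of `bflySupp`: nonzero entries `(a,b)` satisfy
`a ≡ b (mod N/2^p)` and `⌊a/(N/2^{p-1})⌋ = ⌊b/(N/2^{p-1})⌋`. -/
lemma bflySupp_support (L p : ℕ) (h1 : 1 ≤ p) (h2 : p ≤ L) (a b : Fin (2 ^ L))
    (h : bflySupp L p h1 h2 a b ≠ 0) :
    (a : ℕ) % (2 ^ L / 2 ^ p) = (b : ℕ) % (2 ^ L / 2 ^ p) ∧
    (a : ℕ) / (2 * (2 ^ L / 2 ^ p)) = (b : ℕ) / (2 * (2 ^ L / 2 ^ p)) := by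
  have hq : 0 < 2 ^ L / 2 ^ p := by rw [two_pow_div L p h2]; positivity
  rw [bflySupp, Matrix.reindex_apply, Matrix.submatrix_apply, Matrix.kroneckerMap_apply,
    Matrix.kroneckerMap_apply] at h
  have hax := bflyEquiv_val L p h1 h2 ((bflyEquiv L p h1 h2).symm a)
  rw [Equiv.apply_symm_apply] at hax
  have hbx := bflyEquiv_val L p h1 h2 ((bflyEquiv L p h1 h2).symm b)
  rw [Equiv.apply_symm_apply] at hbx
  set x := (bflyEquiv L p h1 h2).symm a with hx
  set y := (bflyEquiv L p h1 h2).symm b with hy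
  have h1' : x.1 = y.1 := by
    by_contra hne
    rw [Matrix.one_apply_ne hne, zero_mul] at h
    exact h rfl
  have h3' : x.2.2 = y.2.2 := by
    by_contra hne
    rw [Matrix.one_apply_ne hne, mul_zero, mul_zero] at h
    exact h rfl
  obtain ⟨ham, had⟩ := decomp_mod_div (2 ^ L / 2 ^ p) x.1 x.2.1 x.2.2 a hq x.2.1.isLt
    x.2.2.isLt hax
  obtain ⟨hbm, hbd⟩ := decomp_mod_div (2 ^ L / 2 ^ p) y.1 y.2.1 y.2.2 b hq y.2.1.isLt
    y.2.2.isLt hbx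
  rw [ham, hbm, had, hbd, h1', h3']
  exact ⟨rfl, rfl⟩

/-- Product of a list of matrices preserves a reflexive, transitive support relation. -/
lemma list_prod_rel {N : ℕ} (r : Fin N → Fin N → Prop) (hrefl : ∀ a, r a a)
    (htrans : ∀ a b c, r a b → r b c → r a c)
    (l : List (Matrix (Fin N) (Fin N) ℂ))
    (h : ∀ M ∈ l, ∀ a b : Fin N, M a b ≠ 0 → r a b) :
    ∀ a b : Fin N, l.prod a b ≠ 0 → r a b := by
  induction l with
  | nil =>
    intro a b hab
    have : a = b := by
      by_contra hne
      exact hab (by simpa using Matrix.one_apply_ne hne)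
    exact this ▸ hrefl a
  | cons M l ih =>
    intro a b hab
    rw [List.prod_cons, Matrix.mul_apply] at hab
    obtain ⟨m, -, hm⟩ := Finset.exists_ne_zero_of_sum_ne_zero hab
    have hM : M a m ≠ 0 := fun h0 => hm (by rw [h0, zero_mul])
    have hl : l.prod m b ≠ 0 := fun h0 => hm (by rw [h0, mul_zero])
    exact htrans a m b (h M List.mem_cons_self a m hM)
      (ih (fun M' hM' => h M' (List.mem_cons_of_mem _ hM')) m b hl)

/-- For `L ≥ 2`, `N = 2^L`: if `A = X_1 X_2 ⋯ X_L` is a butterfly matrix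
(`supp(X_p) ⊆ supp(S_p)` for every `p ∈ {1,…,L}`), then `A` satisfies the complementary
low-rank property of rank `1` for the canonical partitions: for every `ℓ ∈ {1,…,L-1}` and
all `i, j`, the submatrix `A_{R^(ℓ)_i, C^(ℓ)_j}` has rank at most `1`. -/
theorem butterfly_complementary_low_rank (L : ℕ) (hL : 2 ≤ L)
    (X : Fin L → Matrix (Fin (2 ^ L)) (Fin (2 ^ L)) ℂ)
    (hX : ∀ p : Fin L, ∀ a b, X p a b ≠ 0 →
      bflySupp L ((p : ℕ) + 1) (by omega) (by have := p.isLt; omega) a b ≠ 0)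
    (A : Matrix (Fin (2 ^ L)) (Fin (2 ^ L)) ℂ) (hA : A = (List.ofFn X).prod) :
    ∀ (ℓ : ℕ) (hℓ1 : 1 ≤ ℓ) (hℓ2 : ℓ ≤ L - 1)
      (i : Fin (2 ^ L / 2 ^ ℓ)) (j : Fin (2 ^ ℓ)),
      (A.submatrix (rowIdx L ℓ (by omega) i) (colIdx L ℓ (by omega) j)).rank ≤ 1 := by
  intro ℓ hℓ1 hℓ2 i j
  have hℓL : ℓ ≤ L := by omega
  have hq : 0 < 2 ^ L / 2 ^ ℓ := by rw [two_pow_div L ℓ hℓL]; positivity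
  set Bm : Matrix (Fin (2 ^ L)) (Fin (2 ^ L)) ℂ := ((List.ofFn X).take ℓ).prod with hBm
  set Cm : Matrix (Fin (2 ^ L)) (Fin (2 ^ L)) ℂ := ((List.ofFn X).drop ℓ).prod with hCm
  have hBC : A = Bm * Cm := by
    rw [hA, hBm, hCm, ← List.prod_append, List.take_append_drop]
  -- the left factor respects `· % q = · % q`
  have hB : ∀ a b : Fin (2 ^ L), Bm a b ≠ 0 → (a : ℕ) % (2 ^ L / 2 ^ ℓ) = (b : ℕ) % (2 ^ L / 2 ^ ℓ) := by
    rw [hBm]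
    apply list_prod_rel (fun a b : Fin (2 ^ L) => (a : ℕ) % (2 ^ L / 2 ^ ℓ) = (b : ℕ) % (2 ^ L / 2 ^ ℓ)) (fun a => rfl) (fun a b c h1 h2 => h1.trans h2)
    intro M hM a b hab
    obtain ⟨t, ht, hMe⟩ := List.mem_iff_getElem.mp hM
    have htl : t < ℓ := by
      have := (List.length_take : (List.take ℓ (List.ofFn X)).length = _) ▸ ht
      simp at this
      omega
    have htL : t < L := by omega
    rw [List.getElem_take, List.getElem_ofFn] at hMe
    subst hMe
    have hsupp := bflySupp_support L (t + 1) (by omega) (by omega) a b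
      (hX ⟨t, by simpa using htL⟩ a b (by simpa using hab))
    have hdvd : 2 ^ L / 2 ^ ℓ ∣ 2 ^ L / 2 ^ (t + 1) := by
      rw [two_pow_div L ℓ hℓL, two_pow_div L (t + 1) (by omega)]
      exact pow_dvd_pow 2 (by omega)
    calc (a : ℕ) % (2 ^ L / 2 ^ ℓ)
        = (a : ℕ) % (2 ^ L / 2 ^ (t + 1)) % (2 ^ L / 2 ^ ℓ) := (Nat.mod_mod_of_dvd _ hdvd).symm
      _ = (b : ℕ) % (2 ^ L / 2 ^ (t + 1)) % (2 ^ L / 2 ^ ℓ) := by rw [hsupp.1]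
      _ = (b : ℕ) % (2 ^ L / 2 ^ ℓ) := Nat.mod_mod_of_dvd _ hdvd
  -- the right factor respects `· / q = · / q`
  have hC : ∀ a b : Fin (2 ^ L), Cm a b ≠ 0 → (a : ℕ) / (2 ^ L / 2 ^ ℓ) = (b : ℕ) / (2 ^ L / 2 ^ ℓ) := by
    rw [hCm]
    apply list_prod_rel (fun a b : Fin (2 ^ L) => (a : ℕ) / (2 ^ L / 2 ^ ℓ) = (b : ℕ) / (2 ^ L / 2 ^ ℓ)) (fun a => rfl) (fun a b c h1 h2 => h1.trans h2)
    intro M hM a b hab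
    obtain ⟨t, ht, hMe⟩ := List.mem_iff_getElem.mp hM
    have htL : ℓ + t < L := by
      have := (List.length_drop : (List.drop ℓ (List.ofFn X)).length = _) ▸ ht
      simp at this
      omega
    rw [List.getElem_drop, List.getElem_ofFn] at hMe
    subst hMe
    have hsupp := bflySupp_support L (ℓ + t + 1) (by omega) (by omega) a b
      (hX ⟨ℓ + t, by simpa using htL⟩ a b (by simpa using hab))
    have hkey : 2 ^ L / 2 ^ ℓ = 2 * (2 ^ L / 2 ^ (ℓ + t + 1)) * 2 ^ t := by
      rw [two_pow_div L ℓ hℓL, two_pow_div L (ℓ + t + 1) (by omega)]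
      rw [show L - ℓ = (L - (ℓ + t + 1)) + t + 1 by omega]
      ring
    rw [hkey, ← Nat.div_div_eq_div_mul (a : ℕ) (2 * (2 ^ L / 2 ^ (ℓ + t + 1))) (2 ^ t),
      ← Nat.div_div_eq_div_mul (b : ℕ) (2 * (2 ^ L / 2 ^ (ℓ + t + 1))) (2 ^ t), hsupp.2]
  -- the submatrix is a rank-one outer product
  set m0 : Fin (2 ^ L) := colIdx L ℓ hℓL j i with hm0
  have hm0v : (m0 : ℕ) = (j : ℕ) * (2 ^ L / 2 ^ ℓ) + (i : ℕ) := rfl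
  have key : ∀ (k : Fin (2 ^ L / 2 ^ ℓ)) (k' : Fin (2 ^ ℓ)),
      A (rowIdx L ℓ hℓL i k') (colIdx L ℓ hℓL j k) =
        Bm (rowIdx L ℓ hℓL i k') m0 * Cm m0 (colIdx L ℓ hℓL j k) := by
    intro k k'
    rw [hBC, Matrix.mul_apply]
    apply Finset.sum_eq_single m0
    · intro m _ hm
      by_contra hterm
      have hBne : Bm (rowIdx L ℓ hℓL i k') m ≠ 0 := fun h0 => hterm (by rw [h0, zero_mul])
      have hCne : Cm m (colIdx L ℓ hℓL j k) ≠ 0 := fun h0 => hterm (by rw [h0, mul_zero])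
      have h1' := hB _ _ hBne
      have h2' := hC _ _ hCne
      have hrow : ((rowIdx L ℓ hℓL i k' : Fin (2 ^ L)) : ℕ) % (2 ^ L / 2 ^ ℓ) = (i : ℕ) := by
        show ((i : ℕ) + (k' : ℕ) * (2 ^ L / 2 ^ ℓ)) % (2 ^ L / 2 ^ ℓ) = (i : ℕ)
        rw [Nat.add_mul_mod_self_right, Nat.mod_eq_of_lt i.isLt]
      have hcol : ((colIdx L ℓ hℓL j k : Fin (2 ^ L)) : ℕ) / (2 ^ L / 2 ^ ℓ) = (j : ℕ) := by
        show ((j : ℕ) * (2 ^ L / 2 ^ ℓ) + (k : ℕ)) / (2 ^ L / 2 ^ ℓ) = (j : ℕ)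
        rw [mul_comm, Nat.mul_add_div hq, Nat.div_eq_of_lt k.isLt]
        omega
      rw [hrow] at h1'
      rw [hcol] at h2'
      apply hm
      apply Fin.ext
      have hdm := Nat.div_add_mod (m : ℕ) (2 ^ L / 2 ^ ℓ)
      rw [h2', ← h1'] at hdm
      rw [hm0v, ← hdm]
      ring
    · intro hmem
      exact absurd (Finset.mem_univ m0) hmem
  have hsub : A.submatrix (rowIdx L ℓ hℓL i) (colIdx L ℓ hℓL j) =
      Matrix.vecMulVec (fun k' => Bm (rowIdx L ℓ hℓL i k') m0)
        (fun k => Cm m0 (colIdx L ℓ hℓL j k)) := by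
    ext k' k
    rw [Matrix.submatrix_apply, key k k', Matrix.vecMulVec_apply]
  have : (A.submatrix (rowIdx L ℓ hℓL i) (colIdx L ℓ hℓL j)).rank ≤ 1 := by
    rw [hsub, Matrix.vecMulVec_eq Unit]
    exact le_trans (Matrix.rank_mul_le_left _ _)
      (le_trans (Matrix.rank_le_card_width _) (by simp))
  exact this
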